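/- arXiv:1703.03380 — 2 statements merged into one kernel-verified Lean document; each statement's English description precedes it below -/
import Mathlib

section
/- Every nonempty compact set Γ ⊆ ℝ^N satisfying Γ = S₁ '' Γ ∪ S₂ '' Γ is contained in the subspace P. (Lemma 2.3, second assertion.) -/
open Set Filter

noncomputable section

abbrev E (N : ℕ) := EuclideanSpace ℝ (Fin N)

/-- Vertex `p_j` of the regular simplex. -/
def gPt (N : ℕ) (j : Fin N) : E N :=
  (Real.sqrt 2)⁻¹ • (EuclideanSpace.single j (1 : ℝ) -
    (N : ℝ)⁻¹ • ∑ i : Fin N, EuclideanSpace.single i (1 : ℝ))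

/-- The affine map `S_j`. -/
def gS (N : ℕ) (j : Fin N) (x : E N) : E N :=
  ((N : ℝ) + 2)⁻¹ • x +
    (((N : ℝ) + 2)⁻¹ * (2 + ((N : ℝ) - 1) * (inner ℝ x (gPt N j) : ℝ) / ‖gPt N j‖ ^ 2)) • gPt N j

/-- Subspace `P`, the span of `p₁, p₂`. -/
def gP (N : ℕ) (hN : 2 ≤ N) : Submodule ℝ (E N) :=
  Submodule.span ℝ {gPt N ⟨0, by omega⟩, gPt N ⟨1, by omega⟩}

/-- any nonempty compact set invariant under `{S₁, S₂}` lies in `P`. -/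
theorem attractor_subset_P (N : ℕ) (hN : 2 ≤ N) (Γ : Set (E N))
    (hne : Γ.Nonempty) (hc : IsCompact Γ)
    (hinv : Γ = gS N ⟨0, by omega⟩ '' Γ ∪ gS N ⟨1, by omega⟩ '' Γ) :
    Γ ⊆ (gP N hN : Set (E N)) := by
  set K := gP N hN with hK
  set Q : E N →L[ℝ] (Kᗮ : Submodule ℝ (E N)) :=
    Submodule.orthogonalProjectionOnto (Kᗮ) with hQ
  set f : E N → ℝ := fun x => ‖(Q x : E N)‖ with hf
  have hfcont : Continuous f := (Q.continuous.subtype_val).norm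
  -- key contraction property
  have hkey : ∀ (j : Fin N), gPt N j ∈ K → ∀ x, f (gS N j x) = ((N : ℝ) + 2)⁻¹ * f x := by
    intro j hj x
    have hz : Q (gPt N j) = 0 :=
      Submodule.orthogonalProjectionOnto_apply_of_mem_orthogonal
        (K.le_orthogonal_orthogonal hj)
    have : Q (gS N j x) = ((N : ℝ) + 2)⁻¹ • Q x := by
      simp only [gS, map_add, map_smul, hz, smul_zero, add_zero]
    simp only [hf, this, Submodule.coe_smul, norm_smul, Real.norm_eq_abs]
    congr 1
    rw [abs_of_nonneg]
    positivity
  have h0 : gPt N ⟨0, by omega⟩ ∈ K := Submodule.subset_span (by simp)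
  have h1 : gPt N ⟨1, by omega⟩ ∈ K := Submodule.subset_span (by simp)
  -- max of f on Γ
  obtain ⟨x₀, hx₀Γ, hmax⟩ := hc.exists_isMaxOn hne hfcont.continuousOn
  have hfx₀ : f x₀ = 0 := by
    have hx₀' : x₀ ∈ gS N ⟨0, by omega⟩ '' Γ ∪ gS N ⟨1, by omega⟩ '' Γ := hinv ▸ hx₀Γ
    have hlt : ((N : ℝ) + 2)⁻¹ < 1 := by
      have h0N : (0:ℝ) ≤ N := Nat.cast_nonneg N
      rw [inv_lt_one_iff₀]; right; linarith
    have hle : f x₀ ≤ ((N : ℝ) + 2)⁻¹ * f x₀ := by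
      rcases hx₀' with ⟨y, hy, hyx⟩ | ⟨y, hy, hyx⟩
      · calc f x₀ = ((N : ℝ) + 2)⁻¹ * f y := by rw [← hyx, hkey _ h0]
          _ ≤ ((N : ℝ) + 2)⁻¹ * f x₀ := by
            apply mul_le_mul_of_nonneg_left (hmax hy); positivity
      · calc f x₀ = ((N : ℝ) + 2)⁻¹ * f y := by rw [← hyx, hkey _ h1]
          _ ≤ ((N : ℝ) + 2)⁻¹ * f x₀ := by
            apply mul_le_mul_of_nonneg_left (hmax hy); positivity
    have hnn : 0 ≤ f x₀ := norm_nonneg _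
    by_contra hne0
    have hpos : 0 < f x₀ := lt_of_le_of_ne hnn (Ne.symm hne0)
    have : ((N : ℝ) + 2)⁻¹ * f x₀ < 1 * f x₀ := mul_lt_mul_of_pos_right hlt hpos
    linarith
  intro x hx
  have hfx : f x = 0 := le_antisymm (hfx₀ ▸ hmax hx) (norm_nonneg _)
  have hQx : Q x = 0 := by
    have := norm_eq_zero.mp hfx
    exact Subtype.ext this
  have hxmem : x ∈ Kᗮᗮ := by
    rwa [Submodule.orthogonalProjectionOnto_eq_zero_iff] at hQx
  rwa [Submodule.orthogonal_orthogonal] at hxmem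
end
end

section
/- Assume N ≥ 3. For all j, k with 3 ≤ j, k ≤ N one has Π(p_j) = Π(p_k); writing p = Π(p₃) for this common point, moreover ‖p₁ − p‖ = ‖p₂ − p‖. (Lemma 2.3, last assertion.) -/
open Set Filter

noncomputable section

/-- Orthogonal projection onto `P`. -/
def gProj (N : ℕ) (hN : 2 ≤ N) (x : E N) : E N :=
  (Submodule.orthogonalProjectionOnto (gP N hN) x : E N)

lemma inner_single_one (N : ℕ) (j : Fin N) (v : E N) :
    (inner ℝ (EuclideanSpace.single j (1 : ℝ)) v : ℝ) = v j := by
  rw [EuclideanSpace.inner_single_left]; simp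

lemma sum_single_apply (N : ℕ) (j : Fin N) :
    (∑ i : Fin N, EuclideanSpace.single i (1 : ℝ)) j = 1 := by
  rw [WithLp.ofLp_sum, Finset.sum_apply]
  simp [EuclideanSpace.single_apply]

lemma inner_gPt (N : ℕ) (hN : 1 ≤ N) (j k : Fin N) :
    (inner ℝ (gPt N j) (gPt N k) : ℝ) = ((if j = k then 1 else 0) - (N : ℝ)⁻¹) / 2 := by
  have hNne : (N : ℝ) ≠ 0 := by positivity
  set s : E N := ∑ i : Fin N, EuclideanSpace.single i (1 : ℝ) with hs
  have hje : ∀ a b : Fin N, (inner ℝ (EuclideanSpace.single a (1 : ℝ))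
      (EuclideanSpace.single b (1 : ℝ)) : ℝ) = if a = b then 1 else 0 := by
    intro a b
    rw [inner_single_one]
    simp [EuclideanSpace.single_apply, eq_comm]
  have hjs : ∀ a : Fin N, (inner ℝ (EuclideanSpace.single a (1 : ℝ)) s : ℝ) = 1 := by
    intro a; rw [inner_single_one, hs, sum_single_apply]
  have hsj : ∀ a : Fin N, (inner ℝ s (EuclideanSpace.single a (1 : ℝ)) : ℝ) = 1 := by
    intro a; rw [real_inner_comm]; exact hjs a
  have hss : (inner ℝ s s : ℝ) = N := by
    rw [hs, sum_inner]
    simp only [← hs, hjs]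
    simp
  have h2 : ((Real.sqrt 2 : ℝ))⁻¹ * (Real.sqrt 2)⁻¹ = (2 : ℝ)⁻¹ := by
    rw [← mul_inv, Real.mul_self_sqrt (by norm_num : (0:ℝ) ≤ 2)]
  unfold gPt
  rw [real_inner_smul_left, real_inner_smul_right, ← mul_assoc, h2]
  rw [inner_sub_left, inner_sub_right, inner_sub_right, real_inner_smul_left,
    real_inner_smul_left, real_inner_smul_right, real_inner_smul_right,
    hje, hjs, hsj, hss]
  have hNN : (N : ℝ)⁻¹ * ((N : ℝ)⁻¹ * (N : ℝ)) = (N : ℝ)⁻¹ := by field_simp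
  rw [hNN]
  ring

lemma mem_orthogonal_gP (N : ℕ) (hN : 2 ≤ N) (v : E N)
    (h0 : (inner ℝ (gPt N ⟨0, by omega⟩) v : ℝ) = 0)
    (h1 : (inner ℝ (gPt N ⟨1, by omega⟩) v : ℝ) = 0) :
    v ∈ (gP N hN)ᗮ := by
  rw [Submodule.mem_orthogonal]
  intro u hu
  induction hu using Submodule.span_induction with
  | mem x hx => rcases hx with rfl | rfl
                · exact h0
                · exact h1
  | zero => simp
  | add x y _ _ hx hy => rw [inner_add_left, hx, hy, add_zero]
  | smul c x _ hx => rw [real_inner_smul_left, hx, mul_zero]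

/-- for `j, k ≥ 3` one has `Π(p_j) = Π(p_k)`, and with
`p = Π(p₃)` one has `‖p₁ − p‖ = ‖p₂ − p‖`. -/
theorem proj_of_other_vertices (N : ℕ) (hN : 3 ≤ N) :
    (∀ j k : Fin N, 2 ≤ (j : ℕ) → 2 ≤ (k : ℕ) →
      gProj N (by omega) (gPt N j) = gProj N (by omega) (gPt N k)) ∧
    ‖gPt N ⟨0, by omega⟩ - gProj N (by omega) (gPt N ⟨2, by omega⟩)‖ =
      ‖gPt N ⟨1, by omega⟩ - gProj N (by omega) (gPt N ⟨2, by omega⟩)‖ := by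
  have h2N : 2 ≤ N := by omega
  have h1N : 1 ≤ N := by omega
  set p0 : E N := gPt N ⟨0, by omega⟩ with hp0
  set p1 : E N := gPt N ⟨1, by omega⟩ with hp1
  constructor
  · intro j k hj hk
    have hdiff : gPt N j - gPt N k ∈ (gP N h2N)ᗮ := by
      apply mem_orthogonal_gP
      · rw [real_inner_comm, inner_sub_left, inner_gPt N h1N, inner_gPt N h1N]
        have hj0 : j ≠ (⟨0, by omega⟩ : Fin N) := by
          simp [Fin.ext_iff]; omega
        have hk0 : k ≠ (⟨0, by omega⟩ : Fin N) := by
          simp [Fin.ext_iff]; omega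
        rw [if_neg hj0, if_neg hk0]; ring
      · rw [real_inner_comm, inner_sub_left, inner_gPt N h1N, inner_gPt N h1N]
        have hj1 : j ≠ (⟨1, by omega⟩ : Fin N) := by
          simp [Fin.ext_iff]; omega
        have hk1 : k ≠ (⟨1, by omega⟩ : Fin N) := by
          simp [Fin.ext_iff]; omega
        rw [if_neg hj1, if_neg hk1]; ring
    have := Submodule.orthogonalProjectionOnto_apply_of_mem_orthogonal hdiff
    rw [map_sub, sub_eq_zero] at this
    unfold gProj
    exact congrArg _ this
  · set q : E N := gProj N h2N (gPt N ⟨2, by omega⟩) with hq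
    have horth : gPt N ⟨2, by omega⟩ - q ∈ (gP N h2N)ᗮ :=
      Submodule.sub_starProjection_mem_orthogonal _
    have hmem0 : p0 ∈ gP N h2N := Submodule.subset_span (by left; rfl)
    have hmem1 : p1 ∈ gP N h2N := Submodule.subset_span (by right; rfl)
    have key : ∀ (a : E N), a ∈ gP N h2N →
        (inner ℝ a q : ℝ) = inner ℝ a (gPt N ⟨2, by omega⟩) := by
      intro a ha
      have := (Submodule.mem_orthogonal _ _).1 horth a ha
      rw [inner_sub_right] at this
      linarith
    have h02 : (⟨0, by omega⟩ : Fin N) ≠ ⟨2, by omega⟩ := by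
      simp [Fin.ext_iff]
    have h12 : (⟨1, by omega⟩ : Fin N) ≠ ⟨2, by omega⟩ := by
      simp [Fin.ext_iff]
    have hiq : (inner ℝ p0 q : ℝ) = inner ℝ p1 q := by
      rw [key p0 hmem0, key p1 hmem1, hp0, hp1, inner_gPt N h1N, inner_gPt N h1N,
        if_neg h02, if_neg h12]
    have hnn : ‖p0‖ ^ 2 = ‖p1‖ ^ 2 := by
      rw [← real_inner_self_eq_norm_sq, ← real_inner_self_eq_norm_sq, hp0, hp1,
        inner_gPt N h1N, inner_gPt N h1N, if_pos rfl, if_pos rfl]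
    have hsq : ‖p0 - q‖ ^ 2 = ‖p1 - q‖ ^ 2 := by
      rw [norm_sub_sq_real, norm_sub_sq_real, hnn, hiq]
    rw [← Real.sqrt_sq (norm_nonneg (p0 - q)), ← Real.sqrt_sq (norm_nonneg (p1 - q)), hsq]
end
end
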